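/- (Flat-domain version of Lemma 2.) Let n ≥ 1, m ≥ 1, let U be an open subset of the Euclidean space ℝ^{n+1}, and let f^1, …, f^m : ℝ^{n+1} → ℝ each be harmonic on U, i.e. each f^α is C² on U and ∑_{i=0}^{n} ∂²f^α/∂x_i² = 0 at every point of U. Define the pointwise energy density norm |∇f|(y) = (∑_{α=1}^{m} ‖∇f^α(y)‖²)^{1/2}. Then at every point x ∈ U with |∇f|(x) ≠ 0, the function |∇f| is differentiable at x and ‖∇(|∇f|)(x)‖² ≤ (n/(n+1)) · ∑_{α=1}^{m} ∑_{i,j=0}^{n} (∂²f^α/∂x_i∂x_j (x))². Equivalently, |∇²f(x)|² ≥ (1 + 1/n) |∇|∇f|(x)|². -/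

import Mathlib

open Finset

local notation "⟪" x ", " y "⟫" => @inner ℝ _ _ x y

variable {E : Type*} [NormedAddCommGroup E] [InnerProductSpace ℝ E] [CompleteSpace E]
  {ι : Type*} [Fintype ι] {κ : Type*} [Fintype κ]

lemma kato_parseval (b : OrthonormalBasis ι ℝ E) (x : E) :
    ∑ i, ⟪b i, x⟫ ^ 2 = ‖x‖ ^ 2 := by
  have h := b.sum_inner_mul_inner x x
  rw [real_inner_self_eq_norm_sq] at h
  rw [← h]
  refine Finset.sum_congr rfl fun i _ => ?_
  rw [sq, real_inner_comm]

lemma kato_sum_sq_fst (T : E →L[ℝ] E →L[ℝ] ℝ) (b c : OrthonormalBasis ι ℝ E)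
    (v : E) : ∑ i, (T (b i) v) ^ 2 = ∑ i, (T (c i) v) ^ 2 := by
  have key : ∀ (d : OrthonormalBasis ι ℝ E), ∑ i, (T (d i) v) ^ 2 =
      ‖(InnerProductSpace.toDual ℝ E).symm (T.flip v)‖ ^ 2 := by
    intro d
    rw [← kato_parseval d]
    refine Finset.sum_congr rfl fun i _ => ?_
    rw [real_inner_comm, InnerProductSpace.toDual_symm_apply, ContinuousLinearMap.flip_apply]
  rw [key b, key c]

lemma kato_sum_sq_snd (T : E →L[ℝ] E →L[ℝ] ℝ) (b c : OrthonormalBasis ι ℝ E)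
    (u : E) : ∑ j, (T u (b j)) ^ 2 = ∑ j, (T u (c j)) ^ 2 := by
  have key : ∀ (d : OrthonormalBasis ι ℝ E), ∑ j, (T u (d j)) ^ 2 =
      ‖(InnerProductSpace.toDual ℝ E).symm (T u)‖ ^ 2 := by
    intro d
    rw [← kato_parseval d]
    refine Finset.sum_congr rfl fun j _ => ?_
    rw [real_inner_comm, InnerProductSpace.toDual_symm_apply]
  rw [key b, key c]

lemma kato_frobenius (T : E →L[ℝ] E →L[ℝ] ℝ) (b c : OrthonormalBasis ι ℝ E) :
    ∑ i, ∑ j, (T (b i) (b j)) ^ 2 = ∑ i, ∑ j, (T (c i) (c j)) ^ 2 := by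
  calc ∑ i, ∑ j, (T (b i) (b j)) ^ 2 = ∑ i, ∑ j, (T (b i) (c j)) ^ 2 :=
        Finset.sum_congr rfl fun i _ => kato_sum_sq_snd T b c (b i)
    _ = ∑ j, ∑ i, (T (b i) (c j)) ^ 2 := Finset.sum_comm
    _ = ∑ j, ∑ i, (T (c i) (c j)) ^ 2 :=
        Finset.sum_congr rfl fun j _ => kato_sum_sq_fst T b c (c j)
    _ = ∑ i, ∑ j, (T (c i) (c j)) ^ 2 := Finset.sum_comm

lemma kato_trace (T : E →L[ℝ] E →L[ℝ] ℝ) (b c : OrthonormalBasis ι ℝ E) :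
    ∑ i, T (b i) (b i) = ∑ i, T (c i) (c i) := by
  have expand : ∀ u w : E, T u w = ∑ k, ⟪c k, w⟫ * T u (c k) := by
    intro u w
    conv_lhs => rw [← c.sum_repr' w]
    rw [map_sum]
    refine Finset.sum_congr rfl fun k _ => ?_
    rw [map_smul, smul_eq_mul]
  have hwk : ∀ (u : E) (k : ι),
      ⟪u, (InnerProductSpace.toDual ℝ E).symm (T.flip (c k))⟫ = T u (c k) := by
    intro u k
    rw [real_inner_comm, InnerProductSpace.toDual_symm_apply, ContinuousLinearMap.flip_apply]
  calc ∑ i, T (b i) (b i) = ∑ i, ∑ k, ⟪c k, b i⟫ * T (b i) (c k) :=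
        Finset.sum_congr rfl fun i _ => expand (b i) (b i)
    _ = ∑ k, ∑ i, ⟪c k, b i⟫ * ⟪b i, (InnerProductSpace.toDual ℝ E).symm (T.flip (c k))⟫ := by
        rw [Finset.sum_comm]
        exact Finset.sum_congr rfl fun k _ => Finset.sum_congr rfl fun i _ => by rw [hwk]
    _ = ∑ k, ⟪c k, (InnerProductSpace.toDual ℝ E).symm (T.flip (c k))⟫ :=
        Finset.sum_congr rfl fun k _ => OrthonormalBasis.sum_inner_mul_inner b _ _
    _ = ∑ k, T (c k) (c k) := Finset.sum_congr rfl fun k _ => hwk _ k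

lemma kato_matrix (n : ℕ) (hn : 1 ≤ n) (M : Fin (n + 1) → Fin (n + 1) → ℝ)
    (hsymm : ∀ i j, M i j = M j i) (htr : ∑ i, M i i = 0) :
    ∑ j, (M 0 j) ^ 2 ≤ ((n : ℝ) / (n + 1)) * ∑ i, ∑ j, (M i j) ^ 2 := by
  have hd : M 0 0 = -∑ i : Fin n, M i.succ i.succ := by
    rw [Fin.sum_univ_succ] at htr; linarith
  set S : ℝ := ∑ j : Fin n, (M 0 j.succ) ^ 2 with hS
  set Q : ℝ := ∑ i : Fin n, (M i.succ i.succ) ^ 2 with hQ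
  have hd2 : (M 0 0) ^ 2 ≤ n * Q := by
    rw [hd, neg_sq]
    calc (∑ i : Fin n, M i.succ i.succ) ^ 2 ≤ ((#(univ : Finset (Fin n)) : ℝ)) * ∑ i : Fin n, (M i.succ i.succ) ^ 2 :=
          sq_sum_le_card_mul_sum_sq
      _ = n * Q := by simp [hQ]
  have hQR : Q ≤ ∑ i : Fin n, ∑ j : Fin n, (M i.succ j.succ) ^ 2 := by
    refine Finset.sum_le_sum fun i _ => ?_
    exact Finset.single_le_sum (fun j _ => sq_nonneg (M i.succ j.succ)) (Finset.mem_univ i)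
  have hS0 : 0 ≤ S := Finset.sum_nonneg fun j _ => sq_nonneg _
  have hfrob : ∑ i, ∑ j, (M i j) ^ 2 =
      (M 0 0) ^ 2 + S + S + ∑ i : Fin n, ∑ j : Fin n, (M i.succ j.succ) ^ 2 := by
    rw [Fin.sum_univ_succ]
    rw [Fin.sum_univ_succ (f := fun j => (M 0 j) ^ 2)]
    have : ∀ i : Fin n, ∑ j, (M i.succ j) ^ 2 =
        (M 0 i.succ) ^ 2 + ∑ j : Fin n, (M i.succ j.succ) ^ 2 := by
      intro i
      rw [Fin.sum_univ_succ, hsymm i.succ 0]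
    rw [Finset.sum_congr rfl fun i _ => this i, Finset.sum_add_distrib]
    ring
  have hlhs : ∑ j, (M 0 j) ^ 2 = (M 0 0) ^ 2 + S := by rw [Fin.sum_univ_succ]
  rw [hlhs, hfrob]
  rw [div_mul_eq_mul_div, le_div_iff₀ (by positivity : (0:ℝ) < (n:ℝ) + 1)]
  have hn' : (1:ℝ) ≤ n := by exact_mod_cast hn
  nlinarith [sq_nonneg (M 0 0), hd2, hQR, hS0, hn']


set_option maxHeartbeats 1600000 in
/-- Flat-domain version of Lemma 2 (refined Kato inequality for harmonic maps):
for `f = (f^1, …, f^m)` with each component harmonic on an open set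
`U ⊆ ℝ^{n+1}`, at each point where `|∇f| = (∑_α ‖∇f^α‖²)^{1/2} ≠ 0`, the function
`|∇f|` is differentiable and `‖∇|∇f|‖² ≤ (n/(n+1)) |∇²f|²`, equivalently
`|∇²f|² ≥ (1 + 1/n) |∇|∇f||²`. -/
theorem refined_kato_harmonic_map (n m : ℕ) (hn : 1 ≤ n) (hm : 1 ≤ m)
    (U : Set (EuclideanSpace ℝ (Fin (n + 1)))) (hU : IsOpen U)
    (f : Fin m → EuclideanSpace ℝ (Fin (n + 1)) → ℝ)
    (hC2 : ∀ α, ContDiffOn ℝ 2 (f α) U)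
    (hharm : ∀ α, ∀ y ∈ U,
      ∑ i, fderiv ℝ (fun z => fderiv ℝ (f α) z (EuclideanSpace.single i 1)) y
        (EuclideanSpace.single i 1) = 0)
    (x : EuclideanSpace ℝ (Fin (n + 1))) (hx : x ∈ U)
    (hgrad : Real.sqrt (∑ α, ‖gradient (f α) x‖ ^ 2) ≠ 0) :
    DifferentiableAt ℝ (fun y => Real.sqrt (∑ α, ‖gradient (f α) y‖ ^ 2)) x ∧
      ‖gradient (fun y => Real.sqrt (∑ α, ‖gradient (f α) y‖ ^ 2)) x‖ ^ 2 ≤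
        ((n : ℝ) / (n + 1)) *
          ∑ α, ∑ i, ∑ j,
            (fderiv ℝ (fun z => fderiv ℝ (f α) z (EuclideanSpace.single j 1)) x
              (EuclideanSpace.single i 1)) ^ 2 := by
  classical
  have hxU : U ∈ nhds x := hU.mem_nhds hx
  have hCa : ∀ α, ContDiffAt ℝ 2 (f α) x := fun α => (hC2 α).contDiffAt hxU
  set T : Fin m → _ := fun α => fderiv ℝ (fderiv ℝ (f α)) x with hTdef
  have hTd : ∀ α, HasFDerivAt (fderiv ℝ (f α)) (T α) x := by
    intro α
    have h1 : ContDiffAt ℝ 1 (fderiv ℝ (f α)) x :=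
      (hCa α).fderiv_right (m := 1) (by norm_num)
    exact (h1.differentiableAt one_ne_zero).hasFDerivAt
  have hbridge : ∀ α (w u : EuclideanSpace ℝ (Fin (n + 1))),
      fderiv ℝ (fun z => fderiv ℝ (f α) z w) x u = T α u w := by
    intro α w u
    have h2 : HasFDerivAt (fun z => fderiv ℝ (f α) z w)
        ((ContinuousLinearMap.apply ℝ ℝ w).comp (T α)) x :=
      (ContinuousLinearMap.apply ℝ ℝ w).hasFDerivAt.comp x (hTd α)
    rw [h2.fderiv]
    simp
  have hsymm : ∀ α u w, T α u w = T α w u := fun α =>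
    (hCa α).isSymmSndFDerivAt (by simp [minSmoothness_of_isRCLikeNormedField])
  set bg : OrthonormalBasis (Fin (n + 1)) ℝ (EuclideanSpace ℝ (Fin (n + 1))) :=
    EuclideanSpace.basisFun (Fin (n + 1)) ℝ with hbgdef
  have hbg : ∀ i, bg i = EuclideanSpace.single i 1 := fun i =>
    EuclideanSpace.basisFun_apply (Fin (n + 1)) ℝ i
  have htr : ∀ α, ∑ i, T α (bg i) (bg i) = 0 := by
    intro α
    calc ∑ i, T α (bg i) (bg i)
        = ∑ i, fderiv ℝ (fun z => fderiv ℝ (f α) z (EuclideanSpace.single i 1)) x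
            (EuclideanSpace.single i 1) :=
          Finset.sum_congr rfl fun i _ => by rw [hbg, hbridge]
      _ = 0 := hharm α x hx
  set v : Fin m → EuclideanSpace ℝ (Fin (n + 1)) := fun α => gradient (f α) x with hvdef
  have hgradfd : ∀ α (y : EuclideanSpace ℝ (Fin (n + 1)))
      (u : EuclideanSpace ℝ (Fin (n + 1))),
      ⟪gradient (f α) y, u⟫ = fderiv ℝ (f α) y u := fun α y u =>
    InnerProductSpace.toDual_symm_apply
  have hphi : ∀ α (w : EuclideanSpace ℝ (Fin (n + 1))),
      HasFDerivAt (fun y => fderiv ℝ (f α) y w)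
        ((ContinuousLinearMap.apply ℝ ℝ w).comp (T α)) x := fun α w =>
    (ContinuousLinearMap.apply ℝ ℝ w).hasFDerivAt.comp x (hTd α)
  set e : EuclideanSpace ℝ (Fin (n + 1)) → ℝ :=
    fun y => ∑ α, ∑ i, (fderiv ℝ (f α) y (bg i)) ^ 2 with hedef
  have hnormeq : ∀ α (y : EuclideanSpace ℝ (Fin (n + 1))),
      ∑ i, (fderiv ℝ (f α) y (bg i)) ^ 2 = ‖gradient (f α) y‖ ^ 2 := by
    intro α y
    rw [← kato_parseval bg (gradient (f α) y)]
    exact Finset.sum_congr rfl fun i _ => by rw [real_inner_comm, hgradfd]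
  set D0 : EuclideanSpace ℝ (Fin (n + 1)) →L[ℝ] ℝ :=
    ∑ α, ∑ i, ((fderiv ℝ (f α) x (bg i)) •
        ((ContinuousLinearMap.apply ℝ ℝ (bg i)).comp (T α)) +
      (fderiv ℝ (f α) x (bg i)) •
        ((ContinuousLinearMap.apply ℝ ℝ (bg i)).comp (T α))) with hD0def
  have hE : HasFDerivAt e D0 x := by
    rw [hD0def]
    refine HasFDerivAt.fun_sum fun α _ => HasFDerivAt.fun_sum fun i _ => ?_
    have h := (hphi α (bg i)).fun_mul (hphi α (bg i))
    simpa [pow_two] using h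
  have hexpand : ∀ α (u : EuclideanSpace ℝ (Fin (n + 1))),
      T α u (v α) = ∑ i, ⟪bg i, v α⟫ * T α u (bg i) := by
    intro α u
    conv_lhs => rw [← bg.sum_repr' (v α)]
    rw [map_sum]
    exact Finset.sum_congr rfl fun i _ => by rw [map_smul, smul_eq_mul]
  have hD0 : ∀ u, D0 u = ∑ α, 2 * T α u (v α) := by
    intro u
    rw [hD0def]
    rw [ContinuousLinearMap.sum_apply]
    refine Finset.sum_congr rfl fun α _ => ?_
    rw [ContinuousLinearMap.sum_apply, hexpand α u, Finset.mul_sum]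
    refine Finset.sum_congr rfl fun i _ => ?_
    rw [ContinuousLinearMap.add_apply, ContinuousLinearMap.smul_apply,
      ContinuousLinearMap.comp_apply, ContinuousLinearMap.apply_apply, smul_eq_mul]
    rw [real_inner_comm, hgradfd]
    ring
  have hexs : e x = ∑ α, ‖gradient (f α) x‖ ^ 2 :=
    Finset.sum_congr rfl fun α _ => hnormeq α x
  have hex : 0 < e x := by
    rw [hexs]
    rcases lt_or_ge 0 (∑ α, ‖gradient (f α) x‖ ^ 2) with h | h
    · exact h
    · exact absurd (Real.sqrt_eq_zero'.mpr h) hgrad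
  have hsne : Real.sqrt (e x) ≠ 0 := by positivity
  have hF : HasFDerivAt (fun y => Real.sqrt (e y))
      ((1 / (2 * Real.sqrt (e x))) • D0) x :=
    (Real.hasDerivAt_sqrt (ne_of_gt hex)).comp_hasFDerivAt x hE
  have hfun : (fun y => Real.sqrt (∑ α, ‖gradient (f α) y‖ ^ 2)) =
      fun y => Real.sqrt (e y) := by
    funext y
    congr 1
    simp only [hedef]
    exact Finset.sum_congr rfl fun α _ => (hnormeq α y).symm
  rw [hfun]
  refine ⟨hF.differentiableAt, ?_⟩
  set D := (1 / (2 * Real.sqrt (e x))) • D0 with hDdef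
  set W := (InnerProductSpace.toDual ℝ (EuclideanSpace ℝ (Fin (n + 1)))).symm D with hWdef
  have hgrd : gradient (fun y => Real.sqrt (e y)) x = W := hF.hasGradientAt.gradient
  rw [hgrd]
  have hWinner : ∀ u, ⟪W, u⟫ = D u := fun u => InnerProductSpace.toDual_symm_apply
  have hDu : ∀ u, D u = (∑ α, T α u (v α)) / Real.sqrt (e x) := by
    intro u
    rw [hDdef, ContinuousLinearMap.smul_apply, hD0 u, smul_eq_mul]
    rw [← Finset.mul_sum]
    field_simp
  have hRHS : ∑ α, ∑ i, ∑ j,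
      (fderiv ℝ (fun z => fderiv ℝ (f α) z (EuclideanSpace.single j 1)) x
        (EuclideanSpace.single i 1)) ^ 2 = ∑ α, ∑ i, ∑ j, (T α (bg i) (bg j)) ^ 2 := by
    refine Finset.sum_congr rfl fun α _ => Finset.sum_congr rfl fun i _ =>
      Finset.sum_congr rfl fun j _ => ?_
    rw [hbridge, ← hbg i, ← hbg j]
  rw [hRHS]
  by_cases hW0 : W = 0
  · rw [hW0, norm_zero]
    have h1 : (0:ℝ) ≤ ((n : ℝ) / (n + 1)) := by positivity
    have h2 : (0:ℝ) ≤ ∑ α, ∑ i, ∑ j, (T α (bg i) (bg j)) ^ 2 := by positivity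
    nlinarith
  · have hWn : ‖W‖ ≠ 0 := norm_ne_zero_iff.mpr hW0
    have hu1 : ‖((‖W‖⁻¹ : ℝ) • W : EuclideanSpace ℝ (Fin (n + 1)))‖ = 1 :=
      norm_smul_inv_norm hW0
    have horth : Orthonormal ℝ (Set.restrict {(0 : Fin (n + 1))}
        (fun _ => (‖W‖⁻¹ : ℝ) • W : Fin (n + 1) → EuclideanSpace ℝ (Fin (n + 1)))) := by
      constructor
      · intro i
        exact hu1
      · intro i j hij
        exfalso
        apply hij
        have hi := i.2
        have hj := j.2
        simp only [Set.mem_singleton_iff] at hi hj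
        exact Subtype.ext (hi.trans hj.symm)
    have hcard : Module.finrank ℝ (EuclideanSpace ℝ (Fin (n + 1))) =
        Fintype.card (Fin (n + 1)) := finrank_euclideanSpace
    obtain ⟨b, hb⟩ := horth.exists_orthonormalBasis_extension_of_card_eq hcard
    have hb0 : b 0 = (‖W‖⁻¹ : ℝ) • W := hb 0 rfl
    have hWb0 : ⟪W, b 0⟫ = ‖W‖ := by
      rw [hb0, real_inner_smul_right, real_inner_self_eq_norm_sq]
      field_simp
    have hnormW : ‖W‖ ^ 2 = (D (b 0)) ^ 2 := by rw [← hWb0, hWinner]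
    set N := ∑ α, T α (b 0) (v α) with hNdef
    have hexp : ∀ α, T α (b 0) (v α) = ∑ j, ⟪b j, v α⟫ * T α (b 0) (b j) := by
      intro α
      conv_lhs => rw [← b.sum_repr' (v α)]
      rw [map_sum]
      exact Finset.sum_congr rfl fun j _ => by rw [map_smul, smul_eq_mul]
    have hCS : N ^ 2 ≤ (e x) * ∑ α, ∑ j, (T α (b 0) (b j)) ^ 2 := by
      have h1 : N = ∑ p : Fin m × Fin (n + 1), ⟪b p.2, v p.1⟫ * T p.1 (b 0) (b p.2) := by
        rw [hNdef, Fintype.sum_prod_type]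
        exact Finset.sum_congr rfl fun α _ => hexp α
      have h2 := Finset.sum_mul_sq_le_sq_mul_sq Finset.univ
        (fun p : Fin m × Fin (n + 1) => ⟪b p.2, v p.1⟫)
        (fun p : Fin m × Fin (n + 1) => T p.1 (b 0) (b p.2))
      rw [← h1] at h2
      have h3 : ∑ p : Fin m × Fin (n + 1), ⟪b p.2, v p.1⟫ ^ 2 = e x := by
        rw [Fintype.sum_prod_type, hexs]
        exact Finset.sum_congr rfl fun α _ => kato_parseval b (v α)
      have h4 : ∑ p : Fin m × Fin (n + 1), (T p.1 (b 0) (b p.2)) ^ 2 =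
          ∑ α, ∑ j, (T α (b 0) (b j)) ^ 2 := by rw [Fintype.sum_prod_type]
      rw [h3, h4] at h2
      exact h2
    have hperα : ∀ α, ∑ j, (T α (b 0) (b j)) ^ 2 ≤
        ((n : ℝ) / (n + 1)) * ∑ i, ∑ j, (T α (b i) (b j)) ^ 2 := fun α =>
      kato_matrix n hn (fun i j => T α (b i) (b j))
        (fun i j => hsymm α (b i) (b j))
        (by rw [kato_trace (T α) b bg]; exact htr α)
    have hfrobeq : ∀ α, ∑ i, ∑ j, (T α (b i) (b j)) ^ 2 =
        ∑ i, ∑ j, (T α (bg i) (bg j)) ^ 2 := fun α => kato_frobenius (T α) b bg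
    calc ‖W‖ ^ 2 = N ^ 2 / e x := by
          rw [hnormW, hDu, div_pow, Real.sq_sqrt hex.le]
      _ ≤ (e x * ∑ α, ∑ j, (T α (b 0) (b j)) ^ 2) / e x := by
          gcongr
      _ = ∑ α, ∑ j, (T α (b 0) (b j)) ^ 2 := by field_simp
      _ ≤ ∑ α, ((n : ℝ) / (n + 1)) * ∑ i, ∑ j, (T α (b i) (b j)) ^ 2 :=
          Finset.sum_le_sum fun α _ => hperα α
      _ = ((n : ℝ) / (n + 1)) * ∑ α, ∑ i, ∑ j, (T α (bg i) (bg j)) ^ 2 := by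
          rw [← Finset.mul_sum]
          congr 1
          exact Finset.sum_congr rfl fun α _ => hfrobeq α
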